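/- Every cycle of length n ≥ 3 with n ≠ 5 admits an odd 4-coloring, i.e., a proper 4-coloring in which every vertex has some color appearing an odd number of times among its two neighbors. -/
import Mathlib


open SimpleGraph

/-- A proper 4-coloring: adjacent vertices receive distinct colors. -/
def IsProper4 {V : Type*} (G : SimpleGraph V) (φ : V → Fin 4) : Prop :=
  ∀ ⦃u w : V⦄, G.Adj u w → φ u ≠ φ w

/-- The number of neighbors of `v` colored `i`. -/
noncomputable def nbrCount {V : Type*} (G : SimpleGraph V) (φ : V → Fin 4) (v : V) (i : Fin 4) : ℕ :=
  {u | u ∈ G.neighborSet v ∧ φ u = i}.ncard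

/-- `v` satisfies the odd condition: some color appears an odd number of times in `N(v)`. -/
def OddAt {V : Type*} (G : SimpleGraph V) (φ : V → Fin 4) (v : V) : Prop :=
  ∃ i : Fin 4, Odd (nbrCount G φ v i)

/-- `v` satisfies the even condition: some color `i ≠ φ v` appears an even number
of times (possibly zero) in `N(v)`. -/
def EvenAt {V : Type*} (G : SimpleGraph V) (φ : V → Fin 4) (v : V) : Prop :=
  ∃ i : Fin 4, i ≠ φ v ∧ Even (nbrCount G φ v i)

/-- An odd 4-coloring: a proper 4-coloring in which every non-isolated vertex
satisfies the odd condition. -/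
def IsOdd4Coloring {V : Type*} (G : SimpleGraph V) (φ : V → Fin 4) : Prop :=
  IsProper4 G φ ∧ ∀ v : V, (G.neighborSet v).Nonempty → OddAt G φ v

lemma key (m : ℕ) (g : ℕ → ℕ) (hg : ∀ a, g a < 4)
    (h1 : ∀ a, a + 1 < m + 3 → g a ≠ g (a + 1))
    (h2 : g (m + 2) ≠ g 0)
    (h3 : ∀ a, a + 2 < m + 3 → g a ≠ g (a + 2))
    (h4 : g (m + 1) ≠ g 0)
    (h5 : g (m + 2) ≠ g 1) :
    ∃ φ : Fin (m + 3) → Fin 4, IsOdd4Coloring (cycleGraph (m + 3)) φ := by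
  set φ : Fin (m + 3) → Fin 4 := fun v => ⟨g v.val, hg _⟩ with hφ
  have hval1 : ((1 : Fin (m + 3))).val = 1 := rfl
  have haddval : ∀ v : Fin (m + 3), ((v + 1 : Fin (m + 3))).val = (v.val + 1) % (m + 3) := by
    intro v; simp [Fin.add_def]
  have hsubval : ∀ v : Fin (m + 3), ((v - 1 : Fin (m + 3))).val = (v.val + (m + 2)) % (m + 3) := by
    intro v; simp [Fin.sub_def, Nat.add_comm]
  have hstep : ∀ v : Fin (m + 3), φ v ≠ φ (v + 1) := by
    intro v
    have hv : v.val < m + 3 := v.isLt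
    simp only [hφ, ne_eq, Fin.mk.injEq, haddval]
    rcases Nat.lt_or_ge (v.val + 1) (m + 3) with h | h
    · rw [Nat.mod_eq_of_lt h]; exact h1 _ h
    · have hv2 : v.val = m + 2 := by omega
      have : (v.val + 1) % (m + 3) = 0 := by rw [hv2]; simp
      rw [this, hv2]; exact h2
  have hside : ∀ v : Fin (m + 3), φ (v - 1) ≠ φ (v + 1) := by
    intro v
    have hv : v.val < m + 3 := v.isLt
    simp only [hφ, ne_eq, Fin.mk.injEq, haddval, hsubval]
    rcases Nat.eq_zero_or_pos v.val with h0 | hpos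
    · rw [h0]
      have e1 : (0 + (m + 2)) % (m + 3) = m + 2 := by
        rw [Nat.zero_add, Nat.mod_eq_of_lt (by omega)]
      have e2 : (0 + 1) % (m + 3) = 1 := by rw [Nat.mod_eq_of_lt (by omega)]
      rw [e1, e2]; exact h5
    · rcases Nat.lt_or_ge (v.val + 1) (m + 3) with h | h
      · have e1 : v.val + (m + 2) = (v.val - 1) + (m + 3) := by omega
        have e2 : (v.val + (m + 2)) % (m + 3) = v.val - 1 := by
          rw [e1, Nat.add_mod_right, Nat.mod_eq_of_lt (by omega)]
        have e3 : (v.val + 1) % (m + 3) = v.val + 1 := Nat.mod_eq_of_lt h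
        rw [e2, e3]
        have := h3 (v.val - 1) (by omega)
        have e4 : v.val - 1 + 2 = v.val + 1 := by omega
        rwa [e4] at this
      · have hv2 : v.val = m + 2 := by omega
        have e1 : (v.val + (m + 2)) % (m + 3) = m + 1 := by
          rw [hv2, show m + 2 + (m + 2) = (m + 1) + (m + 3) by omega,
            Nat.add_mod_right, Nat.mod_eq_of_lt (by omega)]
        have e2 : (v.val + 1) % (m + 3) = 0 := by rw [hv2]; simp
        rw [e1, e2]; exact h4
  refine ⟨φ, ?_, ?_⟩
  · intro u w hadj
    rw [cycleGraph_adj'] at hadj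
    rcases hadj with h | h
    · have : u - w = 1 := Fin.ext (by rw [h, hval1])
      have hu : u = w + 1 := by
        rw [sub_eq_iff_eq_add] at this; exact this.trans (add_comm 1 w)
      rw [hu]; exact (hstep w).symm
    · have : w - u = 1 := Fin.ext (by rw [h, hval1])
      have hw : w = u + 1 := by
        rw [sub_eq_iff_eq_add] at this; exact this.trans (add_comm 1 u)
      rw [hw]; exact hstep u
  · intro v _
    refine ⟨φ (v + 1), ?_⟩
    have hns : (cycleGraph (m + 3)).neighborSet v = {v - 1, v + 1} :=
      cycleGraph_neighborSet (n := m + 1)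
    have hset : {u | u ∈ (cycleGraph (m + 3)).neighborSet v ∧ φ u = φ (v + 1)} = {v + 1} := by
      ext u
      simp only [hns, Set.mem_insert_iff, Set.mem_singleton_iff, Set.mem_setOf_eq]
      constructor
      · rintro ⟨h | h, heq⟩
        · exact absurd heq (h ▸ hside v)
        · exact h
      · rintro rfl; exact ⟨Or.inr rfl, rfl⟩
    rw [nbrCount, hset, Set.ncard_singleton]
    exact odd_one

theorem cycle_odd4colorable (n : ℕ) (hn : 3 ≤ n) (hn5 : n ≠ 5) :
    ∃ φ : Fin n → Fin 4, IsOdd4Coloring (SimpleGraph.cycleGraph n) φ := by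
  obtain ⟨m, rfl⟩ : ∃ m, n = m + 3 := ⟨n - 3, by omega⟩
  rcases hr : (m + 3) % 3 with _ | _ | _ | k
  · exact key m (fun a => a % 3) (fun a => by beta_reduce; omega)
      (fun a ha => by beta_reduce; omega)
      (by beta_reduce; omega)
      (fun a ha => by beta_reduce; omega)
      (by beta_reduce; omega)
      (by beta_reduce; omega)
  · exact key m (fun a => if a < 4 then a else (a - 4) % 3) (fun a => by beta_reduce; split_ifs <;> omega)
      (fun a ha => by beta_reduce; split_ifs <;> omega)
      (by beta_reduce; split_ifs <;> omega)
      (fun a ha => by beta_reduce; split_ifs <;> omega)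
      (by beta_reduce; split_ifs <;> omega)
      (by beta_reduce; split_ifs <;> omega)
  · exact key m (fun a => if a < 8 then a % 4 else (a - 8) % 3) (fun a => by beta_reduce; split_ifs <;> omega)
      (fun a ha => by beta_reduce; split_ifs <;> omega)
      (by beta_reduce; split_ifs <;> omega)
      (fun a ha => by beta_reduce; split_ifs <;> omega)
      (by beta_reduce; split_ifs <;> omega)
      (by beta_reduce; split_ifs <;> omega)
  · omega
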